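/- For any category E, the structure–semantics functor Mnd(E)^op → CAT/E, sending a monad T on E to the forgetful functor U^T : E^T → E, is fully faithful. Consequently, if S and T are monads on E and Φ : E^T ≅ E^S is an isomorphism of categories commuting with the forgetful functors to E, then Φ is induced by a unique monad isomorphism S ≅ T. -/

import Mathlib

open CategoryTheory Limits

universe v u

namespace StructSemAux

open CategoryTheory Category Monad

variable {E : Type u} [Category.{v} E]

lemma eqToHom_f {S : Monad E} {A B : Monad.Algebra S} (h : A = B) :
    (eqToHom h).f = eqToHom (congrArg Monad.Algebra.A h) := by
  subst h; rfl

lemma algebra_ext {S : Monad E} {A B : Monad.Algebra S} (h : A.A = B.A)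
    (w : A.a = S.map (eqToHom h) ≫ B.a ≫ eqToHom h.symm) : A = B := by
  obtain ⟨X, a, _, _⟩ := A
  obtain ⟨Y, b, _, _⟩ := B
  dsimp at h
  subst h
  simp at w
  subst w
  rfl

lemma alg_inj {S T : Monad E} {φ ψ : S ⟶ T}
    (h : Monad.algebraFunctorOfMonadHom φ = Monad.algebraFunctorOfMonadHom ψ) : φ = ψ := by
  ext X
  have h1 : (Monad.algebraFunctorOfMonadHom φ).obj (T.free.obj X) =
      (Monad.algebraFunctorOfMonadHom ψ).obj (T.free.obj X) := Functor.congr_obj h _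
  have h2 : φ.app (T.obj X) ≫ T.μ.app X = ψ.app (T.obj X) ≫ T.μ.app X := by
    have := (eqToHom h1.symm).h
    simp [eqToHom_f] at this
    erw [eqToHom_refl, CategoryTheory.Functor.map_id, id_comp, comp_id] at this
    exact this
  have key : ∀ χ : S ⟶ T, χ.app X = S.map (T.η.app X) ≫ χ.app (T.obj X) ≫ T.μ.app X := by
    intro χ
    rw [χ.toNatTrans.naturality_assoc]
    simp
  rw [key φ, key ψ, h2]

section Construction

variable {S T : Monad E}

/-- transport of an algebra structure map along an equality of objects -/
def transport {X Y : E} (e : Y = X) (b : S.obj Y ⟶ Y) : S.obj X ⟶ X :=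
  S.map (eqToHom e.symm) ≫ b ≫ eqToHom e

lemma transport_unit {X Y : E} (e : Y = X) (b : S.obj Y ⟶ Y)
    (hb : S.η.app Y ≫ b = 𝟙 Y) : S.η.app X ≫ transport e b = 𝟙 X := by
  subst e; simpa [transport] using hb

lemma transport_assoc {X Y : E} (e : Y = X) (b : S.obj Y ⟶ Y)
    (hb : S.μ.app Y ≫ b = S.map b ≫ b) :
    S.μ.app X ≫ transport e b = S.map (transport e b) ≫ transport e b := by
  subst e; simpa [transport] using hb

lemma transport_nat {X X' Y Y' : E} (e : Y = X) (e' : Y' = X')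
    (b : S.obj Y ⟶ Y) (b' : S.obj Y' ⟶ Y') (g : Y ⟶ Y')
    (hc : S.map g ≫ b' = b ≫ g) :
    S.map (eqToHom e.symm ≫ g ≫ eqToHom e') ≫ transport e' b' =
      transport e b ≫ (eqToHom e.symm ≫ g ≫ eqToHom e') := by
  subst e; subst e'; simpa [transport] using hc

variable (G : T.Algebra ⥤ S.Algebra) (hG : G ⋙ S.forget = T.forget)

include hG

/-- carrier equality -/
lemma carrEq (A : T.Algebra) : (G.obj A).A = A.A := Functor.congr_obj hG A

/-- the `S`-algebra structure on the carrier of a `T`-algebra induced by `G`. -/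
def σ (A : T.Algebra) : S.obj A.A ⟶ A.A :=
  transport (carrEq G hG A) (G.obj A).a

lemma σ_unit (A : T.Algebra) : S.η.app A.A ≫ σ G hG A = 𝟙 A.A :=
  transport_unit _ _ (G.obj A).unit

lemma σ_assoc (A : T.Algebra) :
    S.μ.app A.A ≫ σ G hG A = S.map (σ G hG A) ≫ σ G hG A :=
  transport_assoc _ _ (G.obj A).assoc

lemma mapf {A B : T.Algebra} (f : A ⟶ B) :
    (G.map f).f = eqToHom (carrEq G hG A) ≫ f.f ≫ eqToHom (carrEq G hG B).symm :=
  Functor.congr_hom hG f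

lemma ff_eq {A B : T.Algebra} (f : A ⟶ B) :
    f.f = eqToHom (carrEq G hG A).symm ≫ (G.map f).f ≫ eqToHom (carrEq G hG B) := by
  rw [mapf G hG f]; simp

lemma σ_nat {A B : T.Algebra} (f : A ⟶ B) :
    S.map f.f ≫ σ G hG B = σ G hG A ≫ f.f := by
  rw [ff_eq G hG f]
  exact transport_nat _ _ _ _ _ (G.map f).h

/-- the structure map of the free `T`-algebra on `X`, viewed via `G` as an `S`-structure. -/
abbrev τ (X : E) : S.obj (T.obj X) ⟶ T.obj X := σ G hG (T.free.obj X)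

lemma τ_μ (X : E) : S.map (T.μ.app X) ≫ τ G hG X = τ G hG (T.obj X) ≫ T.μ.app X :=
  σ_nat G hG (show T.free.obj (T.obj X) ⟶ T.free.obj X from
    { f := T.μ.app X, h := T.assoc X })

/-- the candidate monad morphism. -/
def φ : S ⟶ T where
  app X := S.map (T.η.app X) ≫ τ G hG X
  naturality := by
    intro X Y g
    have hn : S.map (T.map g) ≫ τ G hG Y = τ G hG X ≫ T.map g :=
      σ_nat G hG (T.free.map g)
    have he : g ≫ T.η.app Y = T.η.app X ≫ T.map g := by
      simpa using T.η.naturality g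
    rw [Category.assoc, ← hn, ← Functor.map_comp_assoc, he, Functor.map_comp_assoc]
  app_η := by
    intro X
    dsimp
    rw [← S.η.naturality_assoc,
      show S.η.app (T.obj X) ≫ τ G hG X = 𝟙 _ from σ_unit G hG (T.free.obj X), comp_id]
    simp only [Functor.id_map]
  app_μ := by
    intro X
    dsimp
    rw [Category.assoc, Category.assoc, ← τ_μ G hG X]
    slice_rhs 2 3 => rw [← Functor.map_comp]
    simp only [Monad.left_unit, Functor.id_obj, Functor.map_id, id_comp, Functor.map_comp, Category.assoc]
    rw [show S.map (𝟙 (T.obj X)) ≫ τ G hG X = τ G hG X by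
        rw [CategoryTheory.Functor.map_id, id_comp]]
    rw [show S.map (τ G hG X) ≫ τ G hG X = S.μ.app (T.obj X) ≫ τ G hG X from
        (σ_assoc G hG (T.free.obj X)).symm, ← S.μ.naturality_assoc]
    rfl

lemma key (A : T.Algebra) : (φ G hG).app A.A ≫ A.a = σ G hG A := by
  have hc : S.map A.a ≫ σ G hG A = τ G hG A.A ≫ A.a :=
    σ_nat G hG (show T.free.obj A.A ⟶ A from
      { f := A.a, h := A.assoc.symm })
  show (S.map (T.η.app A.A) ≫ τ G hG A.A) ≫ A.a = σ G hG A
  rw [Category.assoc, ← hc, ← Functor.map_comp_assoc, A.unit]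
  simp

lemma alg_eq : Monad.algebraFunctorOfMonadHom (φ G hG) = G := by
  have hobj : ∀ A : T.Algebra,
      (Monad.algebraFunctorOfMonadHom (φ G hG)).obj A = G.obj A := by
    intro A
    refine algebra_ext ((carrEq G hG A).symm) ?_
    show (φ G hG).app A.A ≫ A.a = _
    rw [key G hG A]
    simp [σ, transport]
    rfl
  refine CategoryTheory.Functor.ext hobj fun A B f => ?_
  ext
  simp only [Monad.Algebra.comp_f, eqToHom_f, mapf G hG f]
  simp
  erw [eqToHom_refl, eqToHom_refl, id_comp, comp_id]

end Construction

lemma alg_comp {S T U : Monad E} (f : S ⟶ T) (g : T ⟶ U) :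
    Monad.algebraFunctorOfMonadHom (f ≫ g) =
      Monad.algebraFunctorOfMonadHom g ⋙ Monad.algebraFunctorOfMonadHom f := by
  have hobj : ∀ A, (Monad.algebraFunctorOfMonadHom (f ≫ g)).obj A =
      (Monad.algebraFunctorOfMonadHom g ⋙ Monad.algebraFunctorOfMonadHom f).obj A := by
    intro A
    refine algebra_ext rfl ?_
    erw [eqToHom_refl, CategoryTheory.Functor.map_id, id_comp, comp_id]
    simp
    rfl
  refine CategoryTheory.Functor.ext hobj fun A B m => ?_
  ext
  simp only [Monad.Algebra.comp_f, eqToHom_f]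
  simp
  erw [id_comp, comp_id]

lemma alg_id (S : Monad E) :
    Monad.algebraFunctorOfMonadHom (𝟙 S) = 𝟭 S.Algebra := by
  have hobj : ∀ A, (Monad.algebraFunctorOfMonadHom (𝟙 S)).obj A = (𝟭 S.Algebra).obj A := by
    intro A
    refine algebra_ext rfl ?_
    erw [eqToHom_refl, CategoryTheory.Functor.map_id, id_comp, comp_id]
    simp
    rfl
  refine CategoryTheory.Functor.ext hobj fun A B m => ?_
  ext
  simp only [Monad.Algebra.comp_f, eqToHom_f]
  simp
  erw [id_comp, comp_id]

end StructSemAux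

/-- Structure–semantics is fully faithful: for monads `S`, `T` on `E`, every functor
`E^T ⥤ E^S` commuting with the forgetful functors is induced by a unique monad morphism
`S ⟶ T`; consequently any isomorphism of categories `E^T ≅ E^S` over `E` is induced by a
unique isomorphism of monads `S ≅ T`. -/
theorem structure_semantics_fully_faithful {E : Type u} [Category.{v} E] (S T : Monad E) :
    (∀ G : T.Algebra ⥤ S.Algebra, G ⋙ S.forget = T.forget →
      ∃! φ : S ⟶ T, Monad.algebraFunctorOfMonadHom φ = G) ∧
    (∀ (Φ : T.Algebra ⥤ S.Algebra) (Ψ : S.Algebra ⥤ T.Algebra),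
      Φ ⋙ Ψ = 𝟭 T.Algebra → Ψ ⋙ Φ = 𝟭 S.Algebra →
      Φ ⋙ S.forget = T.forget → Ψ ⋙ T.forget = S.forget →
      ∃! φ : S ≅ T, Monad.algebraFunctorOfMonadHom φ.hom = Φ) := by
  constructor
  · intro G hG
    exact ⟨StructSemAux.φ G hG, StructSemAux.alg_eq G hG,
      fun ψ hψ => StructSemAux.alg_inj (hψ.trans (StructSemAux.alg_eq G hG).symm)⟩
  · intro Φ Ψ h1 h2 h3 h4
    set φ := StructSemAux.φ Φ h3 with hφdef
    set ψ := StructSemAux.φ Ψ h4 with hψdef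
    have hφ : Monad.algebraFunctorOfMonadHom φ = Φ := StructSemAux.alg_eq Φ h3
    have hψ : Monad.algebraFunctorOfMonadHom ψ = Ψ := StructSemAux.alg_eq Ψ h4
    have hψφ : ψ ≫ φ = 𝟙 T := by
      apply StructSemAux.alg_inj
      rw [StructSemAux.alg_comp, StructSemAux.alg_id, hφ, hψ, h1]
    have hφψ : φ ≫ ψ = 𝟙 S := by
      apply StructSemAux.alg_inj
      rw [StructSemAux.alg_comp, StructSemAux.alg_id, hφ, hψ, h2]
    refine ⟨⟨φ, ψ, hφψ, hψφ⟩, hφ, ?_⟩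
    intro χ hχ
    apply Iso.ext
    exact StructSemAux.alg_inj (hχ.trans hφ.symm)
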